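/- Let (Ω, 𝒜, P) be a finite probability space, (F_t)_{t=0..T} a filtration with F_0 trivial, and G a random variable with finitely many values, each of positive probability. Suppose P(G = c | F_t) > 0 almost surely for all c and all t ≤ T−1. Define q_t^G(ω) = P(G = G(ω) | F_t)(ω) / P(G = G(ω)), and let G_t = F_t ∨ σ(G). Then the process (1/q_t^G)_{t=0..T−1} is a martingale with respect to the enlarged filtration (G_t) and P. -/

import Mathlib

open MeasureTheory Set

/-- On a finite type with a finite measure, any a.e. strongly measurable real function is
integrable. -/
lemma integrable_of_fintype' {Ω : Type*} [Fintype Ω] {m : MeasurableSpace Ω}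
    {μ : Measure Ω} [IsFiniteMeasure μ] {f : Ω → ℝ}
    (hf : AEStronglyMeasurable f μ) : Integrable f μ :=
  ⟨hf, HasFiniteIntegral.of_bounded (C := ∑ ω : Ω, ‖f ω‖)
    (ae_of_all _ fun a => Finset.single_le_sum (f := fun ω => ‖f ω‖)
      (fun _ _ => norm_nonneg _) (Finset.mem_univ a))⟩

/-- The σ-algebra of sets that slice along each fibre `{G = c}` as an `m₁`-measurable set. -/
def sliceSigma {Ω Γ : Type*} (m₁ : MeasurableSpace Ω) (G : Ω → Γ) : MeasurableSpace Ω where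
  MeasurableSet' A :=
    ∀ c : Γ, ∃ F, MeasurableSet[m₁] F ∧ A ∩ G ⁻¹' {c} = F ∩ G ⁻¹' {c}
  measurableSet_empty := fun c => ⟨∅, MeasurableSet.empty, by simp⟩
  measurableSet_compl := by
    intro A hA c
    obtain ⟨F, hF, hAF⟩ := hA c
    refine ⟨Fᶜ, hF.compl, ?_⟩
    ext ω
    simp only [Set.mem_inter_iff, Set.mem_compl_iff]
    constructor
    · rintro ⟨hnA, hωc⟩
      exact ⟨fun hωF => hnA ((Set.ext_iff.mp hAF ω).mpr ⟨hωF, hωc⟩).1, hωc⟩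
    · rintro ⟨hnF, hωc⟩
      exact ⟨fun hωA => hnF ((Set.ext_iff.mp hAF ω).mp ⟨hωA, hωc⟩).1, hωc⟩
  measurableSet_iUnion := by
    intro f hf c
    choose F hF hFe using fun n => hf n c
    refine ⟨⋃ n, F n, MeasurableSet.iUnion hF, ?_⟩
    rw [Set.iUnion_inter, Set.iUnion_inter]
    exact Set.iUnion_congr hFe

/-- Every set measurable for `m₁ ⊔ σ(G)` slices along `{G = c}` as an `m₁`-measurable set. -/
lemma sup_comap_slice {Ω Γ : Type*} {m₁ : MeasurableSpace Ω} {mΓ : MeasurableSpace Γ}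
    (G : Ω → Γ) {A : Set Ω}
    (hA : MeasurableSet[m₁ ⊔ MeasurableSpace.comap G mΓ] A) (c : Γ) :
    ∃ F, MeasurableSet[m₁] F ∧ A ∩ G ⁻¹' {c} = F ∩ G ⁻¹' {c} := by
  have hle : m₁ ⊔ MeasurableSpace.comap G mΓ ≤ sliceSigma m₁ G := by
    refine sup_le ?_ ?_
    · intro A hA c
      exact ⟨A, hA, rfl⟩
    · intro A hA c
      obtain ⟨S, hS, rfl⟩ := hA
      by_cases hc : c ∈ S
      · refine ⟨Set.univ, MeasurableSet.univ, ?_⟩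
        ext ω
        simp only [Set.mem_inter_iff, Set.mem_univ, true_and, Set.mem_preimage,
          Set.mem_singleton_iff]
        exact ⟨fun h => h.2, fun h => ⟨by rw [h]; exact hc, h⟩⟩
      · refine ⟨∅, MeasurableSet.empty, ?_⟩
        ext ω
        simp only [Set.mem_inter_iff, Set.mem_empty_iff_false, false_and, iff_false,
          Set.mem_preimage, Set.mem_singleton_iff, not_and]
        intro hωS hωc
        rw [hωc] at hωS
        exact hc hωS
  exact hle A hA c

/-- In the initially enlarged filtration `𝒢 t = ℱ t ⊔ σ(G)`, the process
`(1 / q_t^G)_{t = 0..T-1}` is a `(P, 𝒢)`-martingale on the horizon `{0,...,T-1}`. -/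
theorem stmt1 {Ω : Type*} [Fintype Ω] {mΩ : MeasurableSpace Ω}
    (μ : Measure Ω) [IsProbabilityMeasure μ]
    (T : ℕ) (hT : 1 ≤ T) (ℱ : Filtration ℕ mΩ) (hF0 : ℱ 0 = ⊥)
    {Γ : Type*} [Fintype Γ] [MeasurableSpace Γ] [MeasurableSingletonClass Γ]
    (G : Ω → Γ) (hG : Measurable G)
    (hposG : ∀ c : Γ, 0 < (μ (G ⁻¹' {c})).toReal)
    (hpos : ∀ c : Γ, ∀ t ≤ T - 1, ∀ᵐ ω ∂μ,
      0 < (μ[(G ⁻¹' {c}).indicator (fun _ => (1 : ℝ)) | ℱ t]) ω)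
    (qG : ℕ → Ω → ℝ)
    (hqG : ∀ t ω, qG t ω =
      (μ[(G ⁻¹' {G ω}).indicator (fun _ => (1 : ℝ)) | ℱ t]) ω / (μ (G ⁻¹' {G ω})).toReal)
    (𝒢 : Filtration ℕ mΩ)
    (h𝒢 : ∀ t, (𝒢 t : MeasurableSpace Ω) =
      (ℱ t : MeasurableSpace Ω) ⊔ MeasurableSpace.comap G inferInstance) :
    (∀ t ≤ T - 1, StronglyMeasurable[𝒢 t] (fun ω => (qG t ω)⁻¹)) ∧
    ∀ s t, s ≤ t → t ≤ T - 1 →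
      μ[(fun ω => (qG t ω)⁻¹) | 𝒢 s] =ᵐ[μ] fun ω => (qG s ω)⁻¹ := by
  -- Notation
  set P : ℕ → Γ → Ω → ℝ :=
    fun u c => μ[(G ⁻¹' {c}).indicator (fun _ => (1 : ℝ)) | ℱ u] with hP
  set m : Γ → ℝ := fun c => (μ (G ⁻¹' {c})).toReal with hmdef
  set g : ℕ → Ω → ℝ := fun u ω =>
    ∑ c : Γ, (G ⁻¹' {c}).indicator (fun ω' => m c * (P u c ω')⁻¹) ω with hgdef
  -- `(qG u)⁻¹ = g u` pointwise
  have key : ∀ u ω, (qG u ω)⁻¹ = g u ω := by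
    intro u ω
    rw [hqG]
    simp only [hgdef]
    rw [Finset.sum_eq_single (G ω)]
    · rw [Set.indicator_of_mem (by simp : ω ∈ G ⁻¹' {G ω})]
      rw [inv_div, div_eq_mul_inv]
    · intro c _ hc
      refine Set.indicator_of_notMem (fun h => hc ?_) _
      exact (show G ω = c by simpa using h).symm
    · intro h
      exact absurd (Finset.mem_univ _) h
  -- Measurability wrt `𝒢 u`
  have hGc : ∀ c : Γ, MeasurableSet (G ⁻¹' {c}) := fun c => hG (measurableSet_singleton c)
  have hmeasG : ∀ u, StronglyMeasurable[𝒢 u] (fun ω => (qG u ω)⁻¹) := by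
    intro u
    have hFle : (ℱ u : MeasurableSpace Ω) ≤ 𝒢 u := by rw [h𝒢]; exact le_sup_left
    have hGle : MeasurableSpace.comap G inferInstance ≤ (𝒢 u : MeasurableSpace Ω) := by
      rw [h𝒢]; exact le_sup_right
    have hGc' : ∀ c : Γ, MeasurableSet[𝒢 u] (G ⁻¹' {c}) :=
      fun c => hGle _ ⟨{c}, measurableSet_singleton c, rfl⟩
    have hgm : Measurable[𝒢 u] (g u) := by
      refine Finset.measurable_sum _ fun c _ => Measurable.indicator ?_ (hGc' c)
      exact measurable_const.mul
        ((stronglyMeasurable_condExp.measurable.mono hFle le_rfl).inv)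
    have : (fun ω => (qG u ω)⁻¹) = g u := funext (key u)
    rw [this]
    exact hgm.stronglyMeasurable
  -- Global integrability of each ingredient
  have hint : ∀ u, Integrable (fun ω => (qG u ω)⁻¹) μ := by
    intro u
    exact integrable_of_fintype'
      (((hmeasG u).measurable.mono (𝒢.le u) le_rfl).aestronglyMeasurable)
  have hintc : ∀ u (c : Γ),
      Integrable ((G ⁻¹' {c}).indicator (fun ω' => m c * (P u c ω')⁻¹)) μ := by
    intro u c
    refine integrable_of_fintype' (Measurable.aestronglyMeasurable ?_)
    exact (measurable_const.mul
      ((stronglyMeasurable_condExp.measurable.mono (ℱ.le u) le_rfl).inv)).indicator (hGc c)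
  -- Key set-integral computation
  have key_int : ∀ u, u ≤ T - 1 → ∀ c : Γ, ∀ F : Set Ω, MeasurableSet[ℱ u] F →
      ∫ ω in F ∩ G ⁻¹' {c}, m c * (P u c ω)⁻¹ ∂μ = m c * (μ F).toReal := by
    intro u hu c F hF
    set ind : Ω → ℝ := (G ⁻¹' {c}).indicator (fun _ => (1 : ℝ)) with hind
    set h : Ω → ℝ := fun ω => (P u c ω)⁻¹ with hh
    have hhm : StronglyMeasurable[ℱ u] h :=
      (stronglyMeasurable_condExp.measurable.inv).stronglyMeasurable
    have hind_int : Integrable ind μ :=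
      integrable_of_fintype' (Measurable.aestronglyMeasurable
        ((measurable_const.indicator (hGc c))))
    have hmul_int : Integrable (h * ind) μ := by
      refine integrable_of_fintype' (Measurable.aestronglyMeasurable ?_)
      exact ((stronglyMeasurable_condExp.measurable.mono (ℱ.le u) le_rfl).inv).mul
        (measurable_const.indicator (hGc c))
    -- pull-out property
    have hpull : μ[h * ind | ℱ u] =ᵐ[μ] h * P u c := by
      have := condExp_mul_of_stronglyMeasurable_left (μ := μ) hhm hmul_int hind_int
      exact this
    have hone : μ[h * ind | ℱ u] =ᵐ[μ] fun _ => (1 : ℝ) := by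
      filter_upwards [hpull, hpos c u hu] with ω h1 h2
      rw [h1]
      simp only [Pi.mul_apply, hh]
      exact inv_mul_cancel₀ (ne_of_gt h2)
    have hset : ∫ ω in F, (h * ind) ω ∂μ = (μ F).toReal := by
      rw [← setIntegral_condExp (ℱ.le u) hmul_int hF]
      rw [setIntegral_congr_ae ((ℱ.le u) F hF) (hone.mono fun ω hω _ => hω)]
      simp
      rfl
    -- rewrite the left-hand side
    have hrw : ∫ ω in F ∩ G ⁻¹' {c}, m c * (P u c ω)⁻¹ ∂μ
        = m c * ∫ ω in F, (h * ind) ω ∂μ := by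
      rw [integral_const_mul]
      congr 1
      have heq : ∀ ω, (h * ind) ω
          = (G ⁻¹' {c}).indicator (fun ω' => (P u c ω')⁻¹) ω := by
        intro ω
        by_cases hω : ω ∈ G ⁻¹' {c}
        · simp [hind, hh, Set.indicator_of_mem hω]
        · simp [hind, hh, Set.indicator_of_notMem hω]
      calc ∫ ω in F ∩ G ⁻¹' {c}, (P u c ω)⁻¹ ∂μ
          = ∫ ω in F, (G ⁻¹' {c}).indicator (fun ω' => (P u c ω')⁻¹) ω ∂μ :=
            (setIntegral_indicator (hGc c)).symm
        _ = ∫ ω in F, (h * ind) ω ∂μ :=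
            integral_congr_ae (ae_of_all _ fun ω => (heq ω).symm)
    rw [hrw, hset]
  constructor
  · exact fun t _ => hmeasG t
  · intro s t hst htT
    have hsT : s ≤ T - 1 := le_trans hst htT
    have hm : (𝒢 s : MeasurableSpace Ω) ≤ mΩ := 𝒢.le s
    refine (ae_eq_condExp_of_forall_setIntegral_eq hm (hint t)
      (fun A _ _ => (hint s).integrableOn) ?_
      ((hmeasG s).aestronglyMeasurable)).symm
    intro A hA _
    have hAm : MeasurableSet A := hm A hA
    have hA' : MeasurableSet[(ℱ s : MeasurableSpace Ω) ⊔
        MeasurableSpace.comap G inferInstance] A := by rw [← h𝒢]; exact hA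
    choose F hFmeas hFeq using fun c => sup_comap_slice G hA' c
    have calcu : ∀ u, u ≤ T - 1 → s ≤ u →
        ∫ ω in A, (qG u ω)⁻¹ ∂μ = ∑ c : Γ, m c * (μ (F c)).toReal := by
      intro u hu hsu
      calc ∫ ω in A, (qG u ω)⁻¹ ∂μ
          = ∫ ω in A, g u ω ∂μ := by
            exact integral_congr_ae (ae_of_all _ fun ω => key u ω)
        _ = ∑ c : Γ, ∫ ω in A,
              (G ⁻¹' {c}).indicator (fun ω' => m c * (P u c ω')⁻¹) ω ∂μ := by
            simp only [hgdef]
            exact integral_finset_sum _ fun c _ => (hintc u c).integrableOn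
        _ = ∑ c : Γ, ∫ ω in F c ∩ G ⁻¹' {c}, m c * (P u c ω)⁻¹ ∂μ := by
            refine Finset.sum_congr rfl fun c _ => ?_
            rw [setIntegral_indicator (hGc c), hFeq c]
        _ = ∑ c : Γ, m c * (μ (F c)).toReal := by
            refine Finset.sum_congr rfl fun c _ => ?_
            exact key_int u hu c (F c) (ℱ.mono hsu _ (hFmeas c))
    rw [calcu s hsT le_rfl, calcu t htT hst]
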